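/- Let μ be a positive Borel measure on ℝ with all polynomials integrable and with ∫p² dμ > 0 for every nonzero polynomial p, and let p₀,p₁,… be its monic orthogonal polynomials. Fix α ∈ ℝ and let r₁ < ⋯ < r_n be the (distinct real) roots of p_n + α p_{n−1}. Then for every k < n, the polynomial ∏_{i=1}^k (t − r_i) is a linear combination of p₀,…,p_k with all coefficients strictly positive. -/

import Mathlib

open MeasureTheory Polynomial Finset

namespace Stmt6

noncomputable def dip (n : ℕ) (r w : ℕ → ℝ) (f g : Polynomial ℝ) : ℝ :=
  ∑ i ∈ Finset.range n, w i * (f.eval (r i) * g.eval (r i))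

variable {n : ℕ} {r w : ℕ → ℝ}

lemma dip_comm (f g : Polynomial ℝ) : dip n r w f g = dip n r w g f := by
  unfold dip; exact Finset.sum_congr rfl fun i _ => by ring

lemma dip_add_left (f g h : Polynomial ℝ) :
    dip n r w (f + g) h = dip n r w f h + dip n r w g h := by
  unfold dip; rw [← Finset.sum_add_distrib]
  exact Finset.sum_congr rfl fun i _ => by simp [eval_add]; ring

lemma dip_sub_left (f g h : Polynomial ℝ) :
    dip n r w (f - g) h = dip n r w f h - dip n r w g h := by
  unfold dip; rw [← Finset.sum_sub_distrib]
  exact Finset.sum_congr rfl fun i _ => by simp [eval_sub]; ring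

lemma dip_Cmul_left (a : ℝ) (f g : Polynomial ℝ) :
    dip n r w (C a * f) g = a * dip n r w f g := by
  unfold dip; rw [Finset.mul_sum]
  exact Finset.sum_congr rfl fun i _ => by simp [eval_mul]; ring

lemma dip_zero_left (g : Polynomial ℝ) : dip n r w 0 g = 0 := by
  unfold dip; exact Finset.sum_eq_zero fun i _ => by simp

lemma dip_sum_left (s : Finset ℕ) (F : ℕ → Polynomial ℝ) (g : Polynomial ℝ) :
    dip n r w (∑ m ∈ s, F m) g = ∑ m ∈ s, dip n r w (F m) g := by
  classical
  induction s using Finset.induction with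
  | empty => simp [dip_zero_left]
  | @insert a s' hx ih =>
      rw [Finset.sum_insert hx, Finset.sum_insert hx, dip_add_left, ih]

/-- Expansion of a polynomial in a monic degree-graded family. -/
lemma expand (P : ℕ → Polynomial ℝ) :
    ∀ d : ℕ, (∀ m, m ≤ d → (P m).Monic) → (∀ m, m ≤ d → (P m).natDegree = m) →
    ∀ f : Polynomial ℝ, f.natDegree ≤ d →
    ∃ γ : ℕ → ℝ, f = ∑ m ∈ Finset.range (d + 1), C (γ m) * P m := by
  intro d
  induction d with
  | zero =>
    intro hm hd f hf
    have hP0 : P 0 = 1 := ((hm 0 le_rfl).natDegree_eq_zero).mp (hd 0 le_rfl)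
    refine ⟨fun _ => f.coeff 0, ?_⟩
    simp [hP0]
    exact Polynomial.eq_C_of_natDegree_le_zero hf
  | succ d ih =>
    intro hm hd f hf
    set a := f.coeff (d + 1) with ha
    set g := f - C a * P (d + 1) with hg
    have hgP : (P (d+1)).natDegree = d + 1 := hd (d+1) le_rfl
    have hgd : g.natDegree ≤ d := by
      rw [Polynomial.natDegree_le_iff_coeff_eq_zero]
      intro N hN
      rcases eq_or_lt_of_le (Nat.succ_le_of_lt hN) with h | h
      · have hc : (P (d+1)).coeff (d+1) = 1 := by
          have h2 := (hm (d+1) le_rfl).coeff_natDegree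
          rwa [hgP] at h2
        simp [hg, coeff_sub, coeff_C_mul, ← h, hc, ha]
      · have h1 : f.coeff N = 0 := coeff_eq_zero_of_natDegree_lt (lt_of_le_of_lt hf h)
        have h2 : (P (d+1)).coeff N = 0 := coeff_eq_zero_of_natDegree_lt (by omega)
        simp [hg, coeff_sub, coeff_C_mul, h1, h2]
    obtain ⟨γ', hγ'⟩ := ih (fun m hm' => hm m (le_trans hm' (Nat.le_succ d)))
      (fun m hm' => hd m (le_trans hm' (Nat.le_succ d))) g hgd
    refine ⟨Function.update γ' (d+1) a, ?_⟩
    rw [Finset.sum_range_succ]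
    have h1 : ∀ m ∈ Finset.range (d+1),
        C (Function.update γ' (d+1) a m) * P m = C (γ' m) * P m := by
      intro m hmr
      have : m ≠ d + 1 := by have := Finset.mem_range.mp hmr; omega
      rw [Function.update_of_ne this]
    rw [Finset.sum_congr rfl h1, ← hγ', Function.update_self]
    simp [hg]

/-- A nonzero polynomial of small degree cannot vanish on many distinct nodes. -/
lemma vanish (n : ℕ) (r : ℕ → ℝ)
    (hinj : ∀ i j, i < n → j < n → i ≠ j → r i ≠ r j)
    (f : Polynomial ℝ) (hdeg : f.natDegree < n)
    (hev : ∀ i, i < n → f.eval (r i) = 0) : f = 0 := by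
  classical
  have hInj : Set.InjOn r ↑(Finset.range n) := by
    intro i hi j hj hij
    by_contra hne
    exact hinj i j (Finset.mem_range.mp hi) (Finset.mem_range.mp hj) hne hij
  apply Polynomial.eq_zero_of_natDegree_lt_card_of_eval_eq_zero' f
    ((Finset.range n).image r)
  · intro x hx
    obtain ⟨i, hi, rfl⟩ := Finset.mem_image.mp hx
    exact hev i (Finset.mem_range.mp hi)
  · rwa [Finset.card_image_of_injOn hInj, Finset.card_range]

/-- positive definiteness on low degrees -/
lemma dip_self_pos (n : ℕ) (r w : ℕ → ℝ)
    (hinj : ∀ i j, i < n → j < n → i ≠ j → r i ≠ r j)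
    (hw : ∀ i, i < n → 0 < w i)
    (f : Polynomial ℝ) (hf : f ≠ 0) (hdeg : f.natDegree < n) :
    0 < dip n r w f f := by
  unfold dip
  have hnonneg : ∀ i ∈ Finset.range n, 0 ≤ w i * (f.eval (r i) * f.eval (r i)) :=
    fun i hi => mul_nonneg (le_of_lt (hw i (Finset.mem_range.mp hi))) (mul_self_nonneg _)
  have hex : ∃ i, i < n ∧ f.eval (r i) ≠ 0 := by
    by_contra hcon
    push_neg at hcon
    exact hf (vanish n r hinj f hdeg hcon)
  obtain ⟨i, hi, hne⟩ := hex
  exact Finset.sum_pos' hnonneg ⟨i, Finset.mem_range.mpr hi,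
    mul_pos (hw i hi) (mul_self_pos.mpr hne)⟩

/-- orthogonality to lower degrees -/
lemma dip_lower (n : ℕ) (r w : ℕ → ℝ) (P : ℕ → Polynomial ℝ)
    (hm : ∀ m, m < n → (P m).Monic) (hd : ∀ m, m < n → (P m).natDegree = m)
    (ho : ∀ i j, i < n → j < n → i ≠ j → dip n r w (P i) (P j) = 0)
    (j : ℕ) (hj : j < n) (f : Polynomial ℝ) (hf : f.natDegree < j) :
    dip n r w f (P j) = 0 := by
  have hj1 : 1 ≤ j := Nat.one_le_iff_ne_zero.mpr (by rintro rfl; omega)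
  obtain ⟨γ, hγ⟩ := expand P (j - 1) (fun m hm' => hm m (by omega))
    (fun m hm' => hd m (by omega)) f (by omega)
  have hr : j - 1 + 1 = j := by omega
  rw [hγ, dip_sum_left]
  apply Finset.sum_eq_zero
  intro m hmr
  have hmj : m < j := by have := Finset.mem_range.mp hmr; omega
  rw [dip_Cmul_left, ho m j (by omega) hj (by omega), mul_zero]


lemma hinj_of_sort {n : ℕ} {r : ℕ → ℝ} (hsort : ∀ i j, i < j → j < n → r i < r j) :
    ∀ i j, i < n → j < n → i ≠ j → r i ≠ r j := by
  intro i j hi hj hne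
  rcases lt_or_gt_of_ne hne with h | h
  · exact ne_of_lt (hsort i j h hj)
  · exact ne_of_gt (hsort j i h hi)

/-- The Christoffel transform family. -/
noncomputable def chat (r : ℕ → ℝ) (P : ℕ → Polynomial ℝ) (m : ℕ) : Polynomial ℝ :=
  (P (m+1) - C ((P (m+1)).eval (r 0) / (P m).eval (r 0)) * P m) /ₘ (X - C (r 0))

section Christoffel

variable (n : ℕ) (r w : ℕ → ℝ) (P : ℕ → Polynomial ℝ)

/-- orthogonal polynomials do not vanish at the smallest node. -/
lemma evalr0_ne
    (hsort : ∀ i j, i < j → j < n + 1 → r i < r j)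
    (hw : ∀ i, i < n + 1 → 0 < w i)
    (hm : ∀ m, m < n + 1 → (P m).Monic)
    (hd : ∀ m, m < n + 1 → (P m).natDegree = m)
    (ho : ∀ i j, i < n + 1 → j < n + 1 → i ≠ j → dip (n+1) r w (P i) (P j) = 0) :
    ∀ m, m < n + 1 → (P m).eval (r 0) ≠ 0 := by
  intro m hmn
  rcases Nat.eq_zero_or_pos m with rfl | hm1
  · have hP0 : P 0 = 1 := ((hm 0 hmn).natDegree_eq_zero).mp (hd 0 hmn)
    simp [hP0]
  intro hev
  set g := P m /ₘ (X - C (r 0)) with hgdef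
  have hfac : (X - C (r 0)) * g = P m := by
    have h1 := modByMonic_add_div (P m) (X - C (r 0))
    rwa [modByMonic_X_sub_C_eq_C_eval, hev, C_0, zero_add] at h1
  have hgdeg : g.natDegree = m - 1 := by
    rw [hgdef, natDegree_divByMonic _ (monic_X_sub_C (r 0)), hd m hmn, natDegree_X_sub_C]
  have hg0 : g ≠ 0 := by
    intro h
    rw [h, mul_zero] at hfac
    exact (hm m hmn).ne_zero hfac.symm
  have hdip0 : dip (n+1) r w g (P m) = 0 :=
    dip_lower (n+1) r w P hm hd ho m hmn g (by omega)
  have hterm : ∀ i ∈ Finset.range (n+1),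
      w i * (g.eval (r i) * (P m).eval (r i))
        = w i * ((r i - r 0) * (g.eval (r i) * g.eval (r i))) := by
    intro i _
    rw [← hfac]
    simp only [eval_mul, eval_sub, eval_X, eval_C]
    ring
  have hdip0' : ∑ i ∈ Finset.range (n+1),
      w i * ((r i - r 0) * (g.eval (r i) * g.eval (r i))) = 0 := by
    rw [← Finset.sum_congr rfl hterm]
    exact hdip0
  have hnonneg : ∀ i ∈ Finset.range (n+1),
      0 ≤ w i * ((r i - r 0) * (g.eval (r i) * g.eval (r i))) := by
    intro i hi
    have hi' := Finset.mem_range.mp hi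
    rcases Nat.eq_zero_or_pos i with rfl | hipos
    · simp
    · have : (0:ℝ) < r i - r 0 := sub_pos.mpr (hsort 0 i hipos hi')
      exact mul_nonneg (le_of_lt (hw i hi'))
        (mul_nonneg (le_of_lt this) (mul_self_nonneg _))
  have hzero := (Finset.sum_eq_zero_iff_of_nonneg hnonneg).mp hdip0'
  have hgev : ∀ i, i < n → g.eval (r (i+1)) = 0 := by
    intro i hi
    have hz := hzero (i+1) (Finset.mem_range.mpr (by omega))
    have hwpos := hw (i+1) (by omega)
    have hrpos : (0:ℝ) < r (i+1) - r 0 := sub_pos.mpr (hsort 0 (i+1) (by omega) (by omega))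
    have := mul_self_eq_zero.mp (by
      have h1 : w (i+1) * ((r (i+1) - r 0) * (g.eval (r (i+1)) * g.eval (r (i+1)))) = 0 := hz
      have h2 : (r (i+1) - r 0) * (g.eval (r (i+1)) * g.eval (r (i+1))) = 0 :=
        (mul_eq_zero.mp h1).resolve_left (ne_of_gt hwpos)
      exact (mul_eq_zero.mp h2).resolve_left (ne_of_gt hrpos))
    exact this
  have hsort' : ∀ i j, i < j → j < n → r (i+1) < r (j+1) :=
    fun i j hij hj => hsort (i+1) (j+1) (by omega) (by omega)
  apply hg0
  exact vanish n (fun i => r (i+1)) (hinj_of_sort hsort') g (by omega) hgev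

lemma sub_monic_aux (m : ℕ)
    (h1 : (P (m+1)).Monic) (hd1 : (P (m+1)).natDegree = m + 1)
    (h0 : (P m).Monic) (hd0 : (P m).natDegree = m) (c : ℝ) :
    (P (m+1) - C c * P m).Monic ∧ (P (m+1) - C c * P m).natDegree = m + 1 := by
  have hdegc : (C c * P m).natDegree ≤ m := by
    refine le_trans (natDegree_mul_le) ?_
    simp [natDegree_C, hd0]
  have hlt : (C c * P m).degree < (P (m+1)).degree := by
    calc (C c * P m).degree ≤ ((C c * P m).natDegree : WithBot ℕ) := degree_le_natDegree
    _ ≤ (m : WithBot ℕ) := by exact_mod_cast hdegc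
    _ < ((m+1 : ℕ) : WithBot ℕ) := by exact_mod_cast Nat.lt_succ_self m
    _ = (P (m+1)).degree := by rw [degree_eq_natDegree h1.ne_zero, hd1]
  constructor
  · exact h1.sub_of_left hlt
  · rw [natDegree_sub_eq_left_of_natDegree_lt (by omega : (C c * P m).natDegree < (P (m+1)).natDegree), hd1]

lemma keyeq
    (hsort : ∀ i j, i < j → j < n + 1 → r i < r j)
    (hw : ∀ i, i < n + 1 → 0 < w i)
    (hm : ∀ m, m < n + 1 → (P m).Monic)
    (hd : ∀ m, m < n + 1 → (P m).natDegree = m)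
    (ho : ∀ i j, i < n + 1 → j < n + 1 → i ≠ j → dip (n+1) r w (P i) (P j) = 0)
    (m : ℕ) (hmn : m < n) :
    (X - C (r 0)) * chat r P m
      = P (m+1) - C ((P (m+1)).eval (r 0) / (P m).eval (r 0)) * P m := by
  set t := (P (m+1)).eval (r 0) / (P m).eval (r 0) with ht
  set q := P (m+1) - C t * P m with hq
  have hne := evalr0_ne n r w P hsort hw hm hd ho m (by omega)
  have hq0 : q.eval (r 0) = 0 := by
    simp only [hq, eval_sub, eval_mul, eval_C, ht]
    rw [div_mul_cancel₀ _ hne]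
    ring
  have h1 := modByMonic_add_div q (X - C (r 0))
  rw [modByMonic_X_sub_C_eq_C_eval, hq0, C_0, zero_add] at h1
  exact h1

lemma chat_deg
    (hsort : ∀ i j, i < j → j < n + 1 → r i < r j)
    (hw : ∀ i, i < n + 1 → 0 < w i)
    (hm : ∀ m, m < n + 1 → (P m).Monic)
    (hd : ∀ m, m < n + 1 → (P m).natDegree = m)
    (ho : ∀ i j, i < n + 1 → j < n + 1 → i ≠ j → dip (n+1) r w (P i) (P j) = 0)
    (m : ℕ) (hmn : m < n) :
    (chat r P m).Monic ∧ (chat r P m).natDegree = m := by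
  have hsub := sub_monic_aux P m (hm (m+1) (by omega)) (hd (m+1) (by omega))
    (hm m (by omega)) (hd m (by omega)) ((P (m+1)).eval (r 0) / (P m).eval (r 0))
  have hkey := keyeq n r w P hsort hw hm hd ho m hmn
  constructor
  · have hlc : (X - C (r 0)).leadingCoeff * (chat r P m).leadingCoeff = 1 := by
      rw [← leadingCoeff_mul, hkey]
      exact hsub.1
    rw [(monic_X_sub_C (r 0)).leadingCoeff, one_mul] at hlc
    exact hlc
  · have : (chat r P m).natDegree
        = (P (m+1) - C ((P (m+1)).eval (r 0) / (P m).eval (r 0)) * P m).natDegree - 1 := by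
      unfold chat
      rw [natDegree_divByMonic _ (monic_X_sub_C (r 0)), natDegree_X_sub_C]
    rw [this, hsub.2]
    omega

lemma dip_hat (f g : Polynomial ℝ) :
    dip n (fun i => r (i+1)) (fun i => w (i+1) * (r (i+1) - r 0)) f g
      = dip (n+1) r w ((X - C (r 0)) * f) g := by
  unfold dip
  rw [Finset.sum_range_succ']
  have h0 : w 0 * (((X - C (r 0)) * f).eval (r 0) * g.eval (r 0)) = 0 := by
    simp [eval_mul]
  rw [h0, add_zero]
  exact Finset.sum_congr rfl fun i _ => by simp [eval_mul]; ring

lemma chat_orth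
    (hsort : ∀ i j, i < j → j < n + 1 → r i < r j)
    (hw : ∀ i, i < n + 1 → 0 < w i)
    (hm : ∀ m, m < n + 1 → (P m).Monic)
    (hd : ∀ m, m < n + 1 → (P m).natDegree = m)
    (ho : ∀ i j, i < n + 1 → j < n + 1 → i ≠ j → dip (n+1) r w (P i) (P j) = 0) :
    ∀ i j, i < n → j < n → i ≠ j →
      dip n (fun i => r (i+1)) (fun i => w (i+1) * (r (i+1) - r 0))
        (chat r P i) (chat r P j) = 0 := by
  have main : ∀ i j, i < n → j < n → j < i →
      dip n (fun i => r (i+1)) (fun i => w (i+1) * (r (i+1) - r 0))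
        (chat r P i) (chat r P j) = 0 := by
    intro i j hi hj hji
    rw [dip_hat, keyeq n r w P hsort hw hm hd ho i hi, dip_sub_left, dip_Cmul_left]
    have hdegj : (chat r P j).natDegree = j :=
      (chat_deg n r w P hsort hw hm hd ho j hj).2
    have h1 : dip (n+1) r w (P (i+1)) (chat r P j) = 0 := by
      rw [dip_comm]
      exact dip_lower (n+1) r w P hm hd ho (i+1) (by omega) _ (by omega)
    have h2 : dip (n+1) r w (P i) (chat r P j) = 0 := by
      rw [dip_comm]
      exact dip_lower (n+1) r w P hm hd ho i (by omega) _ (by omega)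
    rw [h1, h2]
    ring
  intro i j hi hj hne
  rcases lt_or_gt_of_ne hne with h | h
  · rw [dip_comm]; exact main j i hj hi h
  · exact main i j hi hj h

end Christoffel


section Rel

variable (n : ℕ) (r w : ℕ → ℝ) (P : ℕ → Polynomial ℝ)

/-- The Geronimus-type relation `P j = chat j + s * chat (j-1)` with `s > 0`. -/
lemma rel
    (hsort : ∀ i j, i < j → j < n + 1 → r i < r j)
    (hw : ∀ i, i < n + 1 → 0 < w i)
    (hm : ∀ m, m < n + 1 → (P m).Monic)
    (hd : ∀ m, m < n + 1 → (P m).natDegree = m)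
    (ho : ∀ i j, i < n + 1 → j < n + 1 → i ≠ j → dip (n+1) r w (P i) (P j) = 0)
    (j : ℕ) (hj1 : 1 ≤ j) (hjn : j < n) :
    ∃ s : ℝ, 0 < s ∧ P j = chat r P j + C s * chat r P (j-1) := by
  have hsort' : ∀ i j, i < j → j < n → r (i+1) < r (j+1) :=
    fun i j hij hj => hsort (i+1) (j+1) (by omega) (by omega)
  have hinj' := hinj_of_sort hsort'
  have hw' : ∀ i, i < n → 0 < w (i+1) * (r (i+1) - r 0) :=
    fun i hi => mul_pos (hw (i+1) (by omega))
      (sub_pos.mpr (hsort 0 (i+1) (by omega) (by omega)))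
  have hm' : ∀ m, m < n → (chat r P m).Monic :=
    fun m hmn => (chat_deg n r w P hsort hw hm hd ho m hmn).1
  have hd' : ∀ m, m < n → (chat r P m).natDegree = m :=
    fun m hmn => (chat_deg n r w P hsort hw hm hd ho m hmn).2
  have ho' := chat_orth n r w P hsort hw hm hd ho
  set Dl := P j - chat r P j with hDl
  have hDd : Dl.natDegree ≤ j - 1 := by
    rcases eq_or_ne (P j) (chat r P j) with he | he
    · rw [hDl, he, sub_self, natDegree_zero]; omega
    · have hne : Dl ≠ 0 := sub_ne_zero.mpr he
      have hdeq : (P j).degree = (chat r P j).degree := by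
        rw [degree_eq_natDegree (hm j (by omega)).ne_zero,
          degree_eq_natDegree (hm' j hjn).ne_zero, hd j (by omega), hd' j hjn]
      have hlt := degree_sub_lt hdeq (hm j (by omega)).ne_zero
        (by rw [(hm j (by omega)).leadingCoeff, (hm' j hjn).leadingCoeff])
      have := natDegree_lt_natDegree hne hlt
      rw [hd j (by omega)] at this
      omega
  obtain ⟨γ, hγ⟩ := expand (chat r P) (j-1) (fun m hmm => hm' m (by omega))
    (fun m hmm => hd' m (by omega)) Dl hDd
  have hrange : j - 1 + 1 = j := by omega
  rw [hrange] at hγ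
  have hA : ∀ m, m < j →
      dip n (fun i => r (i+1)) (fun i => w (i+1) * (r (i+1) - r 0)) Dl (chat r P m)
        = γ m * dip n (fun i => r (i+1)) (fun i => w (i+1) * (r (i+1) - r 0))
            (chat r P m) (chat r P m) := by
    intro m hmj
    rw [hγ, dip_sum_left, Finset.sum_eq_single m]
    · rw [dip_Cmul_left]
    · intro b hb hbm
      rw [dip_Cmul_left, ho' b m (by have := Finset.mem_range.mp hb; omega) (by omega) hbm,
        mul_zero]
    · intro hnm
      exact absurd (Finset.mem_range.mpr hmj) hnm
  have hB : ∀ m, m < j →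
      dip n (fun i => r (i+1)) (fun i => w (i+1) * (r (i+1) - r 0)) (P j) (chat r P m)
        = dip (n+1) r w (P (m+1)) (P j)
          - ((P (m+1)).eval (r 0) / (P m).eval (r 0)) * dip (n+1) r w (P m) (P j) := by
    intro m hmj
    rw [dip_comm, dip_hat, keyeq n r w P hsort hw hm hd ho m (by omega),
      dip_sub_left, dip_Cmul_left]
  have hDlsplit : ∀ m, m < j →
      dip n (fun i => r (i+1)) (fun i => w (i+1) * (r (i+1) - r 0)) Dl (chat r P m)
        = dip n (fun i => r (i+1)) (fun i => w (i+1) * (r (i+1) - r 0)) (P j) (chat r P m)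
          - dip n (fun i => r (i+1)) (fun i => w (i+1) * (r (i+1) - r 0))
              (chat r P j) (chat r P m) := by
    intro m hmj
    rw [hDl, dip_sub_left]
  have hzero : ∀ m, m < j - 1 → γ m = 0 := by
    intro m hmj
    have h1 := hA m (by omega)
    have h2 := hDlsplit m (by omega)
    rw [hB m (by omega), ho (m+1) j (by omega) (by omega) (by omega),
      ho m j (by omega) (by omega) (by omega),
      ho' j m hjn (by omega) (by omega)] at h2
    rw [h2] at h1
    have hpos := dip_self_pos n (fun i => r (i+1)) (fun i => w (i+1) * (r (i+1) - r 0))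
      hinj' hw' (chat r P m) (hm' m (by omega)).ne_zero (by rw [hd' m (by omega)]; omega)
    have : γ m * dip n (fun i => r (i+1)) (fun i => w (i+1) * (r (i+1) - r 0))
        (chat r P m) (chat r P m) = 0 := by linarith
    rcases mul_eq_zero.mp this with h | h
    · exact h
    · exact absurd h (ne_of_gt hpos)
  have hspos : 0 < γ (j-1) := by
    have h1 := hA (j-1) (by omega)
    have h2 := hDlsplit (j-1) (by omega)
    have h3 := hB (j-1) (by omega)
    rw [hrange] at h3
    rw [h3, ho (j-1) j (by omega) (by omega) (by omega),
      ho' j (j-1) hjn (by omega) (by omega)] at h2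
    rw [h2] at h1
    have hPj : 0 < dip (n+1) r w (P j) (P j) :=
      dip_self_pos (n+1) r w (hinj_of_sort hsort) hw (P j) (hm j (by omega)).ne_zero
        (by rw [hd j (by omega)]; omega)
    have hPh : 0 < dip n (fun i => r (i+1)) (fun i => w (i+1) * (r (i+1) - r 0))
        (chat r P (j-1)) (chat r P (j-1)) :=
      dip_self_pos n _ _ hinj' hw' (chat r P (j-1)) (hm' (j-1) (by omega)).ne_zero
        (by rw [hd' (j-1) (by omega)]; omega)
    nlinarith [h1, hPj, hPh]
  refine ⟨γ (j-1), hspos, ?_⟩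
  have hsum : Dl = C (γ (j-1)) * chat r P (j-1) := by
    rw [hγ, Finset.sum_eq_single (j-1)]
    · intro b hb hbne
      have : γ b = 0 := hzero b (by have := Finset.mem_range.mp hb; omega)
      rw [this, C_0, zero_mul]
    · intro hnm
      exact absurd (Finset.mem_range.mpr (by omega)) hnm
  have : P j = chat r P j + Dl := by rw [hDl]; ring
  rw [this, hsum]

end Rel

/-- The discrete main theorem. -/
theorem discD : ∀ (n : ℕ) (r w : ℕ → ℝ) (P : ℕ → Polynomial ℝ),
    (∀ i j, i < j → j < n → r i < r j) → (∀ i, i < n → 0 < w i) →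
    (∀ m, m < n → (P m).Monic) → (∀ m, m < n → (P m).natDegree = m) →
    (∀ i j, i < n → j < n → i ≠ j → dip n r w (P i) (P j) = 0) →
    ∀ k j, j ≤ k → k < n →
      0 < dip n r w (∏ i ∈ Finset.range k, (X - C (r i))) (P j) := by
  intro n
  induction n with
  | zero => intro r w P _ _ _ _ _ k j _ hk; omega
  | succ n ih =>
    intro r w P hsort hw hm hd ho k j hjk hkn
    rcases eq_or_lt_of_le hjk with rfl | hjk'
    · -- j = k
      set q := ∏ i ∈ Finset.range j, (X - C (r i)) with hq
      have hqm : q.Monic := monic_prod_of_monic _ _ fun i _ => monic_X_sub_C _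
      have hqd : q.natDegree = j := by
        rw [hq, natDegree_prod _ _ fun i _ => X_sub_C_ne_zero _]
        simp [natDegree_X_sub_C]
      have hsplit : q = P j + (q - P j) := by ring
      rw [hsplit, dip_add_left]
      have h2 : dip (n+1) r w (q - P j) (P j) = 0 := by
        rcases eq_or_ne q (P j) with he | he
        · rw [he, sub_self, dip_zero_left]
        · apply dip_lower (n+1) r w P hm hd ho j hkn
          have hne : q - P j ≠ 0 := sub_ne_zero.mpr he
          have hdeq : q.degree = (P j).degree := by
            rw [degree_eq_natDegree hqm.ne_zero, degree_eq_natDegree (hm j hkn).ne_zero,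
              hqd, hd j hkn]
          have hlt := degree_sub_lt hdeq hqm.ne_zero
            (by rw [hqm.leadingCoeff, (hm j hkn).leadingCoeff])
          have := natDegree_lt_natDegree hne hlt
          rwa [hqd] at this
      rw [h2, add_zero]
      exact dip_self_pos (n+1) r w (hinj_of_sort hsort) hw (P j) (hm j hkn).ne_zero
        (by rw [hd j hkn]; omega)
    · -- j < k
      obtain ⟨k', rfl⟩ : ∃ k', k = k' + 1 := ⟨k - 1, by omega⟩
      have hsort' : ∀ i j, i < j → j < n → r (i+1) < r (j+1) :=
        fun i j hij hj => hsort (i+1) (j+1) (by omega) (by omega)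
      have hw' : ∀ i, i < n → 0 < w (i+1) * (r (i+1) - r 0) :=
        fun i hi => mul_pos (hw (i+1) (by omega))
          (sub_pos.mpr (hsort 0 (i+1) (by omega) (by omega)))
      have hm' : ∀ m, m < n → (chat r P m).Monic :=
        fun m hmn => (chat_deg n r w P hsort hw hm hd ho m hmn).1
      have hd' : ∀ m, m < n → (chat r P m).natDegree = m :=
        fun m hmn => (chat_deg n r w P hsort hw hm hd ho m hmn).2
      have ho' := chat_orth n r w P hsort hw hm hd ho
      have IH := ih (fun i => r (i+1)) (fun i => w (i+1) * (r (i+1) - r 0)) (chat r P)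
        hsort' hw' hm' hd' ho'
      have hprod : ∏ i ∈ Finset.range (k'+1), (X - C (r i))
          = (X - C (r 0)) * ∏ i ∈ Finset.range k', (X - C (r (i+1))) := by
        rw [Finset.prod_range_succ']
        ring
      rw [hprod, ← dip_hat]
      rcases Nat.eq_zero_or_pos j with rfl | hj1
      · have hP0 : P 0 = 1 := ((hm 0 (by omega)).natDegree_eq_zero).mp
          (hd 0 (by omega))
        have hPh0 : chat r P 0 = 1 := ((hm' 0 (by omega)).natDegree_eq_zero).mp
          (hd' 0 (by omega))
        rw [hP0, ← hPh0]
        exact IH k' 0 (by omega) (by omega)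
      · obtain ⟨s, hs, hrel⟩ := rel n r w P hsort hw hm hd ho j hj1 (by omega)
        rw [dip_comm, hrel, dip_add_left, dip_Cmul_left]
        have t1 := IH k' j (by omega) (by omega)
        have t2 := IH k' (j-1) (by omega) (by omega)
        rw [dip_comm] at t1 t2
        exact add_pos t1 (mul_pos hs t2)


section Quad

variable (μ : Measure ℝ)

lemma integ_sum (hint : ∀ q : Polynomial ℝ, Integrable (fun x => q.eval x) μ)
    (s : Finset ℕ) (F : ℕ → Polynomial ℝ) :
    ∫ x, (∑ m ∈ s, F m).eval x ∂μ = ∑ m ∈ s, ∫ x, (F m).eval x ∂μ := by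
  simp_rw [eval_finset_sum]
  exact integral_finset_sum s (fun i _ => hint (F i))

lemma integ_Cmul (a : ℝ) (f : Polynomial ℝ) :
    ∫ x, (C a * f).eval x ∂μ = a * ∫ x, f.eval x ∂μ := by
  simp_rw [eval_mul, eval_C]
  exact integral_const_mul a _

lemma integ_add (hint : ∀ q : Polynomial ℝ, Integrable (fun x => q.eval x) μ)
    (f g : Polynomial ℝ) :
    ∫ x, (f + g).eval x ∂μ = (∫ x, f.eval x ∂μ) + ∫ x, g.eval x ∂μ := by
  simp_rw [eval_add]
  exact integral_add (hint f) (hint g)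

/-- Gauss-type quadrature exactness up to degree `2n-2`. -/
lemma quad_exact
    (hint : ∀ q : Polynomial ℝ, Integrable (fun x => q.eval x) μ)
    (p : ℕ → Polynomial ℝ) (hmonic : ∀ i, (p i).Monic) (hdeg : ∀ i, (p i).natDegree = i)
    (horth : ∀ i j, i ≠ j → ∫ x, (p i).eval x * (p j).eval x ∂μ = 0)
    (n : ℕ) (hn : 1 ≤ n) (α : ℝ) (r : ℕ → ℝ)
    (hsort : ∀ i j, i < j → j < n → r i < r j)
    (hroots : p n + C α * p (n - 1) = ∏ i ∈ Finset.range n, (X - C (r i)))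
    (f : Polynomial ℝ) (hf : f.natDegree ≤ 2*n - 2) :
    ∫ x, f.eval x ∂μ = ∑ i ∈ Finset.range n,
      (∫ x, (Lagrange.basis (Finset.range n) r i).eval x ∂μ) * f.eval (r i) := by
  classical
  have hinj := hinj_of_sort hsort
  have hInjOn : Set.InjOn r ↑(Finset.range n) := by
    intro i hi j hj hij
    by_contra hne
    exact hinj i j (Finset.mem_range.mp hi) (Finset.mem_range.mp hj) hne hij
  have hPim : (∏ i ∈ Finset.range n, (X - C (r i))).Monic :=
    monic_prod_of_monic _ _ fun i _ => monic_X_sub_C _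
  have hPid : (∏ i ∈ Finset.range n, (X - C (r i))).natDegree = n := by
    rw [natDegree_prod _ _ fun i _ => X_sub_C_ne_zero _]
    simp [natDegree_X_sub_C]
  have hPieval : ∀ i, i < n → (∏ i ∈ Finset.range n, (X - C (r i))).eval (r i) = 0 := by
    intro i hi
    rw [eval_prod]
    exact Finset.prod_eq_zero (Finset.mem_range.mpr hi) (by simp)
  set Pi : Polynomial ℝ := ∏ i ∈ Finset.range n, (X - C (r i)) with hPidef
  -- the divByMonic term integrates to zero
  have hPiu : ∫ x, (Pi * (f /ₘ Pi)).eval x ∂μ = 0 := by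
    by_cases hducase : f.degree < Pi.degree
    · have hu0 : f /ₘ Pi = 0 := (divByMonic_eq_zero_iff hPim).mpr hducase
      simp [hu0]
    · have hfn0 : f ≠ 0 := by
        intro h
        apply hducase
        rw [h, degree_zero, degree_eq_natDegree hPim.ne_zero, hPid]
        exact WithBot.bot_lt_coe n
      have hnf : n ≤ f.natDegree := by
        have h1 : Pi.degree ≤ f.degree := not_lt.mp hducase
        rw [degree_eq_natDegree hPim.ne_zero, hPid, degree_eq_natDegree hfn0] at h1
        exact_mod_cast h1
      have hn2 : 2 ≤ n := by omega
      have hudeg : (f /ₘ Pi).natDegree ≤ n - 2 := by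
        rw [natDegree_divByMonic f hPim, hPid]
        omega
      obtain ⟨γ, hγ⟩ := expand p (n-2) (fun m _ => hmonic m) (fun m _ => hdeg m)
        (f /ₘ Pi) hudeg
      rw [hγ, Finset.mul_sum]
      rw [integ_sum μ hint]
      apply Finset.sum_eq_zero
      intro m hm
      have hmlt : m ≤ n - 2 := by have := Finset.mem_range.mp hm; omega
      have hre : Pi * (C (γ m) * p m) = C (γ m) * (Pi * p m) := by ring
      rw [hre, integ_Cmul μ]
      have hPiexp : Pi * p m = p n * p m + C α * (p (n-1) * p m) := by
        rw [← hroots]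
        ring
      have h1 : ∫ x, (p n * p m).eval x ∂μ = 0 := by
        have : (fun x => (p n * p m).eval x) = fun x => (p n).eval x * (p m).eval x := by
          funext x; rw [eval_mul]
        rw [this]
        exact horth n m (by omega)
      have h2 : ∫ x, (p (n-1) * p m).eval x ∂μ = 0 := by
        have : (fun x => (p (n-1) * p m).eval x) = fun x => (p (n-1)).eval x * (p m).eval x := by
          funext x; rw [eval_mul]
        rw [this]
        exact horth (n-1) m (by omega)
      rw [hPiexp, integ_add μ hint, integ_Cmul μ, h1, h2]
      ring
  -- interpolation for the remainder
  have hvdeg : (f %ₘ Pi).degree < (n : WithBot ℕ) := by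
    have := degree_modByMonic_lt f hPim
    rwa [degree_eq_natDegree hPim.ne_zero, hPid] at this
  have hvinterp := Lagrange.eq_interpolate hInjOn
    (by rw [Finset.card_range]; exact_mod_cast hvdeg)
  have hvint : ∫ x, (f %ₘ Pi).eval x ∂μ = ∑ i ∈ Finset.range n,
      (∫ x, (Lagrange.basis (Finset.range n) r i).eval x ∂μ) * (f %ₘ Pi).eval (r i) := by
    conv_lhs => rw [hvinterp, Lagrange.interpolate_apply]
    rw [integ_sum μ hint]
    refine Finset.sum_congr rfl fun i hi => ?_
    rw [integ_Cmul μ]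
    ring
  have hfuv : (f %ₘ Pi) + Pi * (f /ₘ Pi) = f := modByMonic_add_div f Pi
  have hfr : ∀ i, i < n → f.eval (r i) = (f %ₘ Pi).eval (r i) := by
    intro i hi
    conv_lhs => rw [← hfuv]
    rw [eval_add, eval_mul, hPieval i hi]
    ring
  calc ∫ x, f.eval x ∂μ
      = ∫ x, ((f %ₘ Pi) + Pi * (f /ₘ Pi)).eval x ∂μ := by rw [hfuv]
    _ = (∫ x, (f %ₘ Pi).eval x ∂μ) + ∫ x, (Pi * (f /ₘ Pi)).eval x ∂μ := integ_add μ hint _ _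
    _ = ∫ x, (f %ₘ Pi).eval x ∂μ := by rw [hPiu, add_zero]
    _ = ∑ i ∈ Finset.range n,
          (∫ x, (Lagrange.basis (Finset.range n) r i).eval x ∂μ) * (f %ₘ Pi).eval (r i) := hvint
    _ = ∑ i ∈ Finset.range n,
          (∫ x, (Lagrange.basis (Finset.range n) r i).eval x ∂μ) * f.eval (r i) := by
        refine Finset.sum_congr rfl fun i hi => ?_
        rw [hfr i (Finset.mem_range.mp hi)]

end Quad

end Stmt6

open Stmt6 in
theorem stmt_6 (μ : Measure ℝ)
    (hint : ∀ q : Polynomial ℝ, Integrable (fun x => q.eval x) μ)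
    (hpos : ∀ q : Polynomial ℝ, q ≠ 0 → 0 < ∫ x, (q.eval x) ^ 2 ∂μ)
    (p : ℕ → Polynomial ℝ) (hmonic : ∀ i, (p i).Monic) (hdeg : ∀ i, (p i).natDegree = i)
    (horth : ∀ i j, i ≠ j → ∫ x, (p i).eval x * (p j).eval x ∂μ = 0)
    (n : ℕ) (hn : 1 ≤ n) (α : ℝ) (r : ℕ → ℝ)
    (hsort : ∀ i j, i < j → j < n → r i < r j)
    (hroots : p n + C α * p (n - 1) = ∏ i ∈ Finset.range n, (X - C (r i))) :
    ∀ k < n, ∃ c : ℕ → ℝ, (∀ j ≤ k, 0 < c j) ∧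
      ∏ i ∈ Finset.range k, (X - C (r i)) =
        ∑ j ∈ Finset.range (k + 1), C (c j) * p j := by
  classical
  intro k hk
  have hinj := hinj_of_sort hsort
  have hInjOn : Set.InjOn r ↑(Finset.range n) := by
    intro i hi j hj hij
    by_contra hne
    exact hinj i j (Finset.mem_range.mp hi) (Finset.mem_range.mp hj) hne hij
  -- weights
  set w : ℕ → ℝ := fun i => ∫ x, (Lagrange.basis (Finset.range n) r i).eval x ∂μ with hwdef
  have hexact : ∀ f : Polynomial ℝ, f.natDegree ≤ 2*n - 2 →
      ∫ x, f.eval x ∂μ = ∑ i ∈ Finset.range n, w i * f.eval (r i) :=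
    quad_exact μ hint p hmonic hdeg horth n hn α r hsort hroots
  -- weights are positive
  have hwpos : ∀ i, i < n → 0 < w i := by
    intro i hi
    have hbne : Lagrange.basis (Finset.range n) r i ≠ 0 :=
      Lagrange.basis_ne_zero hInjOn (Finset.mem_range.mpr hi)
    have hbd : (Lagrange.basis (Finset.range n) r i).natDegree = n - 1 := by
      rw [Lagrange.natDegree_basis hInjOn (Finset.mem_range.mpr hi), Finset.card_range]
    have hsq : ((Lagrange.basis (Finset.range n) r i) ^ 2).natDegree ≤ 2*n - 2 := by
      rw [natDegree_pow, hbd]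
      omega
    have h1 := hexact _ hsq
    have h2 : ∫ x, ((Lagrange.basis (Finset.range n) r i) ^ 2).eval x ∂μ
        = ∫ x, ((Lagrange.basis (Finset.range n) r i).eval x) ^ 2 ∂μ := by
      congr 1
      funext x
      rw [eval_pow]
    have h3 : ∑ m ∈ Finset.range n,
        w m * ((Lagrange.basis (Finset.range n) r i) ^ 2).eval (r m) = w i := by
      rw [Finset.sum_eq_single i]
      · rw [eval_pow, Lagrange.eval_basis_self hInjOn (Finset.mem_range.mpr hi)]
        ring
      · intro m hm hmne
        rw [eval_pow, Lagrange.eval_basis_of_ne (Ne.symm hmne) hm]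
        ring
      · intro hni
        exact absurd (Finset.mem_range.mpr hi) hni
    have h4 := hpos _ hbne
    rw [← h2, h1, h3] at h4
    exact h4
  -- dip orthogonality of the family p
  have hdiporth : ∀ i j, i < n → j < n → i ≠ j → dip n r w (p i) (p j) = 0 := by
    intro i j hi hj hij
    have hde : (p i * p j).natDegree ≤ 2*n - 2 := by
      refine le_trans natDegree_mul_le ?_
      rw [hdeg i, hdeg j]
      omega
    have h1 := hexact _ hde
    have h2 : ∫ x, (p i * p j).eval x ∂μ = 0 := by
      have : (fun x => (p i * p j).eval x) = fun x => (p i).eval x * (p j).eval x := by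
        funext x; rw [eval_mul]
      rw [this]
      exact horth i j hij
    have h3 : dip n r w (p i) (p j)
        = ∑ m ∈ Finset.range n, w m * (p i * p j).eval (r m) := by
      unfold dip
      exact Finset.sum_congr rfl fun m _ => by rw [eval_mul]
    rw [h3, ← h1, h2]
  -- the discrete positivity theorem
  have hdisc := discD n r w p hsort hwpos (fun m _ => hmonic m) (fun m _ => hdeg m) hdiporth
  -- expansion of the product
  have hqdeg : (∏ i ∈ Finset.range k, (X - C (r i))).natDegree ≤ k := by
    refine le_trans (natDegree_prod_le _ _) ?_
    have : ∀ i ∈ Finset.range k, (X - C (r i)).natDegree = 1 :=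
      fun i _ => natDegree_X_sub_C _
    rw [Finset.sum_congr rfl this]
    simp
  obtain ⟨γ, hγ⟩ := expand p k (fun m _ => hmonic m) (fun m _ => hdeg m) _ hqdeg
  refine ⟨γ, ?_, hγ⟩
  intro j hj
  -- compute ∫ q * p j both ways
  have hqpdeg : ((∏ i ∈ Finset.range k, (X - C (r i))) * p j).natDegree ≤ 2*n - 2 := by
    refine le_trans natDegree_mul_le ?_
    have := hdeg j
    omega
  have h1 := hexact _ hqpdeg
  have h2 : ∑ m ∈ Finset.range n,
      w m * ((∏ i ∈ Finset.range k, (X - C (r i))) * p j).eval (r m)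
        = dip n r w (∏ i ∈ Finset.range k, (X - C (r i))) (p j) := by
    unfold dip
    exact Finset.sum_congr rfl fun m _ => by rw [eval_mul]
  have h3 : ∫ x, ((∏ i ∈ Finset.range k, (X - C (r i))) * p j).eval x ∂μ
      = γ j * ∫ x, (p j * p j).eval x ∂μ := by
    conv_lhs => rw [hγ]
    have hre : (∑ m ∈ Finset.range (k+1), C (γ m) * p m) * p j
        = ∑ m ∈ Finset.range (k+1), C (γ m) * (p m * p j) := by
      rw [Finset.sum_mul]
      exact Finset.sum_congr rfl fun m _ => by ring
    rw [hre, integ_sum μ hint, Finset.sum_eq_single j]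
    · rw [integ_Cmul μ]
    · intro m hm hmne
      rw [integ_Cmul μ]
      have : ∫ x, (p m * p j).eval x ∂μ = 0 := by
        have he : (fun x => (p m * p j).eval x) = fun x => (p m).eval x * (p j).eval x := by
          funext x; rw [eval_mul]
        rw [he]
        exact horth m j hmne
      rw [this, mul_zero]
    · intro hnj
      exact absurd (Finset.mem_range.mpr (by omega)) hnj
  have hnormpos : 0 < ∫ x, (p j * p j).eval x ∂μ := by
    have he : (fun x => (p j * p j).eval x) = fun x => ((p j).eval x) ^ 2 := by
      funext x; rw [eval_mul]; ring
    rw [he]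
    exact hpos _ (hmonic j).ne_zero
  have hdippos : 0 < dip n r w (∏ i ∈ Finset.range k, (X - C (r i))) (p j) :=
    hdisc k j hj hk
  rw [← h2, ← h1, h3] at hdippos
  nlinarith [hdippos, hnormpos]
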